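/- Let f ∈ ℂ[X] be a polynomial of degree n ≥ 1 with f(0) ≠ 0. Suppose there exist polynomials p, q ∈ ℂ[X], with q ≠ 0 and deg p ≤ 1, deg q ≤ 1, such that q · (X · f′) = p · f, where f′ is the derivative of f. Then f is a pure power of a linear form: there exist a, α ∈ ℂ with a ≠ 0 and α ≠ 0 such that f = a·(X + α)^n. -/

import Mathlib

open Polynomial

/-- Let `f ∈ ℂ[X]` have degree `n ≥ 1` and `f(0) ≠ 0`.  If there are
polynomials `p, q` of degree at most `1`, `q ≠ 0`, with `q · (X · f') = p · f`, then
`f` is a pure power of a linear form: `f = a (X + α)^n` with `a ≠ 0` and `α ≠ 0`. -/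
theorem log_toric_derivative_degree_one_implies_pure_power
    (f : Polynomial ℂ) (hdeg : 1 ≤ f.natDegree) (hf0 : f.eval 0 ≠ 0)
    (p q : Polynomial ℂ) (hq : q ≠ 0) (hp1 : p.degree ≤ 1) (hq1 : q.degree ≤ 1)
    (h : q * (X * derivative f) = p * f) :
    ∃ a α : ℂ, a ≠ 0 ∧ α ≠ 0 ∧ f = C a * (X + C α) ^ f.natDegree := by
  have hf : f ≠ 0 := fun h0 => by simp [h0] at hdeg
  have hf' : derivative f ≠ 0 := by
    intro h0
    have := natDegree_eq_zero_of_derivative_eq_zero h0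
    omega
  have hp : p ≠ 0 := by
    rintro rfl
    rw [zero_mul, mul_eq_zero, mul_eq_zero] at h
    rcases h with h | h | h
    · exact hq h
    · exact X_ne_zero h
    · exact hf' h
  -- every root of f is a root of q
  have key : ∀ β : ℂ, f.IsRoot β → q.IsRoot β := by
    intro β hβ
    have hβ0 : β ≠ 0 := fun h0 => hf0 (by subst h0; exact hβ)
    have hXβ : ¬ (X : ℂ[X]).IsRoot β := by simpa [IsRoot] using hβ0
    have hmul : rootMultiplicity β (q * (X * derivative f)) =
        rootMultiplicity β (p * f) := by rw [h]
    rw [rootMultiplicity_mul (mul_ne_zero hq (mul_ne_zero X_ne_zero hf')),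
        rootMultiplicity_mul (mul_ne_zero X_ne_zero hf'),
        rootMultiplicity_mul (mul_ne_zero hp hf),
        rootMultiplicity_eq_zero hXβ,
        derivative_rootMultiplicity_of_root hβ] at hmul
    have hm1 : 1 ≤ rootMultiplicity β f := (rootMultiplicity_pos hf).2 hβ
    have hqpos : 0 < rootMultiplicity β q := by omega
    exact (rootMultiplicity_pos hq).1 hqpos
  -- f has a root
  obtain ⟨β, hβ⟩ := Complex.exists_root (show 0 < f.degree by
    rw [← natDegree_pos_iff_degree_pos]; omega)
  -- all roots of f equal β
  have hall : ∀ γ ∈ f.roots, γ = β := by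
    intro γ hγ
    by_contra hne
    have hγr : q.IsRoot γ := key γ ((mem_roots hf).1 hγ)
    have hβr : q.IsRoot β := key β hβ
    have hle : ({γ, β} : Multiset ℂ) ≤ q.roots := by
      rw [Multiset.le_iff_count]
      intro a
      rcases eq_or_ne a γ with rfl | haγ
      · simpa [Multiset.count_cons, hne] using
          (Multiset.one_le_count_iff_mem).2 ((mem_roots hq).2 hγr)
      · rcases eq_or_ne a β with rfl | haβ
        · simpa [Multiset.count_cons, haγ] using
            (Multiset.one_le_count_iff_mem).2 ((mem_roots hq).2 hβr)
        · simp [Multiset.count_cons, haγ, haβ]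
    have h2 : (2 : ℕ) ≤ Multiset.card q.roots := by
      simpa using Multiset.card_le_card hle
    have h3 := q.card_roots'
    have h4 : q.natDegree ≤ 1 := natDegree_le_iff_degree_le.2 hq1
    omega
  have hcard : Multiset.card f.roots = f.natDegree :=
    IsAlgClosed.card_roots_eq_natDegree
  have hroots : f.roots = Multiset.replicate f.natDegree β := by
    rw [Multiset.eq_replicate]
    exact ⟨hcard, hall⟩
  have hfactor := C_leadingCoeff_mul_prod_multiset_X_sub_C (p := f) hcard
  rw [hroots, Multiset.map_replicate, Multiset.prod_replicate] at hfactor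
  refine ⟨f.leadingCoeff, -β, leadingCoeff_ne_zero.2 hf, ?_, ?_⟩
  · simp only [ne_eq, neg_eq_zero]
    exact fun h0 => hf0 (by subst h0; exact hβ)
  · have hXα : (X + C (-β) : ℂ[X]) = X - C β := by rw [map_neg]; ring
    rw [hXα]
    exact hfactor.symm
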